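/- Let (λ_k)_{k≥1} be a sequence of real numbers with λ_k ≥ 0 for all k and λ_1 > 0, set Λ_n = ∑_{k=1}^n λ_k, and suppose M = sup_{n≥1} (Λ_n/λ_n)·log((Λ_{n+1}/λ_{n+1})/(Λ_n/λ_n)) is finite (in particular λ_n > 0 for all n). Then for every sequence (a_n)_{n≥1} of non-negative real numbers with ∑_{n=1}^∞ a_n convergent, one has ∑_{n=1}^∞ ∏_{k=1}^n a_k^{λ_k/Λ_n} ≤ e^M · ∑_{n=1}^∞ a_n. -/

import Mathlib

/-- Weighted Carleman inequality (Theorem 1 of the paper): if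
`M = sup_n (Λ_n/λ_n) log((Λ_{n+1}/λ_{n+1})/(Λ_n/λ_n))` is finite, then
`∑ G_n ≤ e^M ∑ a_n`. -/
theorem weighted_carleman
    (lam : ℕ → ℝ) (hlam : ∀ k ≥ 1, 0 ≤ lam k) (hlam1 : 0 < lam 1)
    (hlampos : ∀ n ≥ 1, 0 < lam n)
    (Lam : ℕ → ℝ) (hLam : ∀ n, Lam n = ∑ k ∈ Finset.Icc 1 n, lam k)
    (M : ℝ)
    (hM : IsLUB {x : ℝ | ∃ n ≥ 1, x = (Lam n / lam n) *
        Real.log ((Lam (n + 1) / lam (n + 1)) / (Lam n / lam n))} M)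
    (a : ℕ → ℝ) (ha : ∀ n ≥ 1, 0 ≤ a n) (hsum : Summable (fun n : ℕ => a (n + 1))) :
    ∑' n : ℕ, ∏ k ∈ Finset.Icc 1 (n + 1), a k ^ (lam k / Lam (n + 1)) ≤
      Real.exp M * ∑' n : ℕ, a (n + 1) := by
  classical
  -- basic facts
  have hL : ∀ n : ℕ, Lam (n + 1) = Lam n + lam (n + 1) := by
    intro n
    rw [hLam, hLam, Finset.sum_Icc_succ_top (Nat.le_add_left 1 n)]
  have hLpos : ∀ n, 1 ≤ n → 0 < Lam n := by
    intro n hn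
    rw [hLam]
    have h1 : lam 1 ≤ ∑ k ∈ Finset.Icc 1 n, lam k :=
      Finset.single_le_sum (fun k hk => hlam k (Finset.mem_Icc.mp hk).1)
        (Finset.mem_Icc.mpr ⟨le_refl 1, hn⟩)
    linarith
  have hX : ∀ k, 1 ≤ k → 0 < Lam k / lam k := fun k hk =>
    div_pos (hLpos k hk) (hlampos k hk)
  -- the auxiliary sequence `c`
  set c : ℕ → ℝ := fun k =>
    (Lam (k + 1) / lam (k + 1)) *
      ((Lam (k + 1) / lam (k + 1)) / (Lam k / lam k)) ^ (Lam (k - 1) / lam k) with hc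
  have hcpos : ∀ k, 1 ≤ k → 0 < c k := by
    intro k hk
    exact mul_pos (hX (k + 1) (Nat.le_add_left 1 k))
      (Real.rpow_pos_of_pos (div_pos (hX (k + 1) (Nat.le_add_left 1 k)) (hX k hk)) _)
  -- the product identity : ∏_{k ≤ n} c_k ^ λ_k = (Λ_{n+1}/λ_{n+1}) ^ Λ_n
  have hprod : ∀ n : ℕ,
      ∏ k ∈ Finset.Icc 1 n, c k ^ lam k = (Lam (n + 1) / lam (n + 1)) ^ Lam n := by
    intro n
    induction n with
    | zero =>
      have h0 : Lam 0 = 0 := by rw [hLam]; simp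
      simp [h0]
    | succ n ih =>
      rw [Finset.prod_Icc_succ_top (Nat.le_add_left 1 n), ih]
      have hXn : 0 < Lam (n + 1) / lam (n + 1) := hX (n + 1) (Nat.le_add_left 1 n)
      have hXn2 : 0 < Lam (n + 2) / lam (n + 2) := hX (n + 2) (Nat.le_add_left 1 (n + 1))
      have hln : lam (n + 1) ≠ 0 := (hlampos (n + 1) (Nat.le_add_left 1 n)).ne'
      have hcn : c (n + 1) = (Lam (n + 2) / lam (n + 2)) *
          ((Lam (n + 2) / lam (n + 2)) / (Lam (n + 1) / lam (n + 1)))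
            ^ (Lam n / lam (n + 1)) := by
        simp [hc]
      rw [hcn, Real.mul_rpow hXn2.le (Real.rpow_nonneg (div_nonneg hXn2.le hXn.le) _),
        ← Real.rpow_mul (div_nonneg hXn2.le hXn.le), div_mul_cancel₀ _ hln,
        Real.div_rpow hXn2.le hXn.le]
      have hre : (Lam (n + 2) / lam (n + 2)) ^ Lam (n + 1)
          = (Lam (n + 2) / lam (n + 2)) ^ Lam n *
            (Lam (n + 2) / lam (n + 2)) ^ lam (n + 1) := by
        rw [hL n, Real.rpow_add hXn2]
      rw [hre]
      have h1 : (Lam (n + 1) / lam (n + 1) : ℝ) ^ Lam n ≠ 0 :=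
        (Real.rpow_pos_of_pos hXn _).ne'
      field_simp
  -- the key estimate : λ_k c_k / Λ_k ≤ e^M
  have hkey : ∀ k, 1 ≤ k → lam k * c k / Lam k ≤ Real.exp M := by
    intro k hk
    obtain ⟨j, rfl⟩ : ∃ j, k = j + 1 := ⟨k - 1, (Nat.succ_pred_eq_of_pos hk).symm⟩
    have hX1 : 0 < Lam (j + 1) / lam (j + 1) := hX (j + 1) (Nat.le_add_left 1 j)
    have hX2 : 0 < Lam (j + 2) / lam (j + 2) := hX (j + 2) (Nat.le_add_left 1 (j + 1))
    have hr : 0 < (Lam (j + 2) / lam (j + 2)) / (Lam (j + 1) / lam (j + 1)) :=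
      div_pos hX2 hX1
    have hln : lam (j + 1) ≠ 0 := (hlampos (j + 1) (Nat.le_add_left 1 j)).ne'
    have hLn : Lam (j + 1) ≠ 0 := (hLpos (j + 1) (Nat.le_add_left 1 j)).ne'
    have hln2 : lam (j + 2) ≠ 0 := (hlampos (j + 2) (Nat.le_add_left 1 (j + 1))).ne'
    have hLn2 : Lam (j + 2) ≠ 0 := (hLpos (j + 2) (Nat.le_add_left 1 (j + 1))).ne'
    have heq : lam (j + 1) * c (j + 1) / Lam (j + 1) =
        (((Lam (j + 2) / lam (j + 2)) / (Lam (j + 1) / lam (j + 1))))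
          ^ (Lam (j + 1) / lam (j + 1)) := by
      have hexp : Lam (j + 1) / lam (j + 1) = Lam j / lam (j + 1) + 1 := by
        rw [hL j]; field_simp
      have hre : ((Lam (j + 2) / lam (j + 2)) / (Lam (j + 1) / lam (j + 1)))
            ^ (Lam (j + 1) / lam (j + 1))
          = ((Lam (j + 2) / lam (j + 2)) / (Lam (j + 1) / lam (j + 1)))
              ^ (Lam j / lam (j + 1)) *
            ((Lam (j + 2) / lam (j + 2)) / (Lam (j + 1) / lam (j + 1))) := by
        rw [hexp] at hr ⊢
        rw [Real.rpow_add hr, Real.rpow_one]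
      rw [hre]
      have hcn : c (j + 1) = (Lam (j + 2) / lam (j + 2)) *
          ((Lam (j + 2) / lam (j + 2)) / (Lam (j + 1) / lam (j + 1)))
            ^ (Lam j / lam (j + 1)) := by
        simp [hc]
      rw [hcn]
      field_simp
    rw [heq, Real.rpow_def_of_pos hr]
    apply Real.exp_le_exp.mpr
    rw [mul_comm]
    exact hM.1 ⟨j + 1, Nat.le_add_left 1 j, rfl⟩
  -- AM-GM step : G_{m+1} ≤ (Λ_{m+1}⁻¹ - Λ_{m+2}⁻¹) · ∑_{k ≤ m+1} λ_k c_k a_k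
  have hAM : ∀ m : ℕ,
      (∏ k ∈ Finset.Icc 1 (m + 1), a k ^ (lam k / Lam (m + 1))) ≤
        ((Lam (m + 1))⁻¹ - (Lam (m + 2))⁻¹) *
          ∑ k ∈ Finset.Icc 1 (m + 1), lam k * (c k * a k) := by
    intro m
    have hΛ : 0 < Lam (m + 1) := hLpos (m + 1) (Nat.le_add_left 1 m)
    have hΛ2 : 0 < Lam (m + 2) := hLpos (m + 2) (Nat.le_add_left 1 (m + 1))
    have hX2 : 0 < Lam (m + 2) / lam (m + 2) := hX (m + 2) (Nat.le_add_left 1 (m + 1))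
    have hgm := Real.geom_mean_le_arith_mean_weighted (Finset.Icc 1 (m + 1))
        (fun k => lam k / Lam (m + 1)) (fun k => c k * a k)
        (fun k hk => div_nonneg (hlam k (Finset.mem_Icc.mp hk).1) hΛ.le)
        (by rw [← Finset.sum_div, ← hLam]; exact div_self hΛ.ne')
        (fun k hk => mul_nonneg (hcpos k (Finset.mem_Icc.mp hk).1).le
          (ha k (Finset.mem_Icc.mp hk).1))
    have hlhs : ∏ k ∈ Finset.Icc 1 (m + 1), (c k * a k) ^ (lam k / Lam (m + 1)) =
        (Lam (m + 2) / lam (m + 2)) *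
          ∏ k ∈ Finset.Icc 1 (m + 1), a k ^ (lam k / Lam (m + 1)) := by
      have h1 : ∀ k ∈ Finset.Icc 1 (m + 1),
          (c k * a k) ^ (lam k / Lam (m + 1)) =
            (c k) ^ (lam k / Lam (m + 1)) * (a k) ^ (lam k / Lam (m + 1)) := by
        intro k hk
        exact Real.mul_rpow (hcpos k (Finset.mem_Icc.mp hk).1).le
          (ha k (Finset.mem_Icc.mp hk).1)
      rw [Finset.prod_congr rfl h1, Finset.prod_mul_distrib]
      congr 1
      have h2 : ∀ k ∈ Finset.Icc 1 (m + 1),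
          (c k) ^ (lam k / Lam (m + 1)) = ((c k) ^ lam k) ^ (Lam (m + 1))⁻¹ := by
        intro k hk
        rw [div_eq_mul_inv, Real.rpow_mul (hcpos k (Finset.mem_Icc.mp hk).1).le]
      rw [Finset.prod_congr rfl h2,
        Real.finset_prod_rpow _ _ (fun k hk =>
          Real.rpow_nonneg (hcpos k (Finset.mem_Icc.mp hk).1).le _) _,
        hprod (m + 1), ← Real.rpow_mul hX2.le, mul_inv_cancel₀ hΛ.ne', Real.rpow_one]
    rw [hlhs] at hgm
    have hrhs : ∑ k ∈ Finset.Icc 1 (m + 1), (lam k / Lam (m + 1)) * (c k * a k) =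
        (Lam (m + 1))⁻¹ * ∑ k ∈ Finset.Icc 1 (m + 1), lam k * (c k * a k) := by
      rw [Finset.mul_sum]
      exact Finset.sum_congr rfl (fun k _ => by ring)
    rw [hrhs] at hgm
    have hstep := mul_le_mul_of_nonneg_left hgm
      (inv_nonneg.mpr hX2.le)
    rw [inv_mul_cancel_left₀ hX2.ne'] at hstep
    calc ∏ k ∈ Finset.Icc 1 (m + 1), a k ^ (lam k / Lam (m + 1)) ≤
        (Lam (m + 2) / lam (m + 2))⁻¹ *
          ((Lam (m + 1))⁻¹ * ∑ k ∈ Finset.Icc 1 (m + 1), lam k * (c k * a k)) := hstep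
      _ = ((Lam (m + 1))⁻¹ - (Lam (m + 2))⁻¹) *
          ∑ k ∈ Finset.Icc 1 (m + 1), lam k * (c k * a k) := by
        have hid : (Lam (m + 2) / lam (m + 2))⁻¹ * (Lam (m + 1))⁻¹ =
            (Lam (m + 1))⁻¹ - (Lam (m + 2))⁻¹ := by
          have h3 : Lam (m + 2) - Lam (m + 1) = lam (m + 2) := by linarith [hL (m + 1)]
          rw [inv_div, inv_sub_inv hΛ.ne' hΛ2.ne', h3, ← div_eq_mul_inv, div_div,
            mul_comm (Lam (m + 2)) (Lam (m + 1))]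
        rw [← mul_assoc, hid]
  -- nonnegativity of λ_k c_k a_k
  have hbnn : ∀ k, 1 ≤ k → 0 ≤ lam k * (c k * a k) := fun k hk =>
    mul_nonneg (hlam k hk) (mul_nonneg (hcpos k hk).le (ha k hk))
  -- main telescoping estimate
  have hmain : ∀ N : ℕ,
      ∑ n ∈ Finset.Icc 1 N, ∏ k ∈ Finset.Icc 1 n, a k ^ (lam k / Lam n) ≤
        ∑ k ∈ Finset.Icc 1 N, (lam k * (c k * a k)) * ((Lam k)⁻¹ - (Lam (N + 1))⁻¹) := by
    intro N
    induction N with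
    | zero => simp
    | succ N ih =>
      rw [Finset.sum_Icc_succ_top (Nat.le_add_left 1 N)]
      have hsplit : ∑ k ∈ Finset.Icc 1 (N + 1),
          (lam k * (c k * a k)) * ((Lam k)⁻¹ - (Lam (N + 2))⁻¹) =
          (∑ k ∈ Finset.Icc 1 N, (lam k * (c k * a k)) * ((Lam k)⁻¹ - (Lam (N + 1))⁻¹)) +
            ((Lam (N + 1))⁻¹ - (Lam (N + 2))⁻¹) *
              ∑ k ∈ Finset.Icc 1 (N + 1), lam k * (c k * a k) := by
        calc ∑ k ∈ Finset.Icc 1 (N + 1),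
            (lam k * (c k * a k)) * ((Lam k)⁻¹ - (Lam (N + 2))⁻¹) =
            ∑ k ∈ Finset.Icc 1 (N + 1),
              ((lam k * (c k * a k)) * ((Lam k)⁻¹ - (Lam (N + 1))⁻¹) +
                ((Lam (N + 1))⁻¹ - (Lam (N + 2))⁻¹) * (lam k * (c k * a k))) :=
            Finset.sum_congr rfl (fun k _ => by ring)
          _ = (∑ k ∈ Finset.Icc 1 (N + 1),
                (lam k * (c k * a k)) * ((Lam k)⁻¹ - (Lam (N + 1))⁻¹)) +
              ((Lam (N + 1))⁻¹ - (Lam (N + 2))⁻¹) *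
                ∑ k ∈ Finset.Icc 1 (N + 1), lam k * (c k * a k) := by
            rw [Finset.sum_add_distrib, Finset.mul_sum]
          _ = _ := by
            rw [Finset.sum_Icc_succ_top (Nat.le_add_left 1 N)]
            simp
      rw [hsplit]
      have ham := hAM N
      linarith [ih, ham]
  -- combine everything
  have hEnn : (0 : ℝ) ≤ Real.exp M := (Real.exp_pos M).le
  have hrange : ∀ N : ℕ,
      ∑ n ∈ Finset.range N, ∏ k ∈ Finset.Icc 1 (n + 1), a k ^ (lam k / Lam (n + 1)) =
        ∑ n ∈ Finset.Icc 1 N, ∏ k ∈ Finset.Icc 1 n, a k ^ (lam k / Lam n) := by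
    intro N
    induction N with
    | zero => simp
    | succ N ih =>
      rw [Finset.sum_range_succ, Finset.sum_Icc_succ_top (Nat.le_add_left 1 N), ih]
  have harange : ∀ N : ℕ,
      ∑ k ∈ Finset.Icc 1 N, a k ≤ ∑' n : ℕ, a (n + 1) := by
    intro N
    have h1 : ∑ k ∈ Finset.Icc 1 N, a k = ∑ n ∈ Finset.range N, a (n + 1) := by
      induction N with
      | zero => simp
      | succ N ih =>
        rw [Finset.sum_range_succ, Finset.sum_Icc_succ_top (Nat.le_add_left 1 N), ih]
    rw [h1]
    exact Summable.sum_le_tsum _ (fun n _ => ha (n + 1) (Nat.le_add_left 1 n)) hsum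
  have hbound : ∀ N : ℕ,
      ∑ n ∈ Finset.range N, ∏ k ∈ Finset.Icc 1 (n + 1), a k ^ (lam k / Lam (n + 1)) ≤
        Real.exp M * ∑' n : ℕ, a (n + 1) := by
    intro N
    rw [hrange N]
    calc ∑ n ∈ Finset.Icc 1 N, ∏ k ∈ Finset.Icc 1 n, a k ^ (lam k / Lam n) ≤
        ∑ k ∈ Finset.Icc 1 N, (lam k * (c k * a k)) * ((Lam k)⁻¹ - (Lam (N + 1))⁻¹) :=
        hmain N
      _ ≤ ∑ k ∈ Finset.Icc 1 N, Real.exp M * a k := by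
        apply Finset.sum_le_sum
        intro k hk
        have hk1 : 1 ≤ k := (Finset.mem_Icc.mp hk).1
        have h1 : (lam k * (c k * a k)) * ((Lam k)⁻¹ - (Lam (N + 1))⁻¹) ≤
            (lam k * (c k * a k)) * (Lam k)⁻¹ := by
          apply mul_le_mul_of_nonneg_left _ (hbnn k hk1)
          have : (0 : ℝ) ≤ (Lam (N + 1))⁻¹ :=
            inv_nonneg.mpr (hLpos (N + 1) (Nat.le_add_left 1 N)).le
          linarith
        have h2 : (lam k * (c k * a k)) * (Lam k)⁻¹ = (lam k * c k / Lam k) * a k := by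
          ring
        have h3 : (lam k * c k / Lam k) * a k ≤ Real.exp M * a k :=
          mul_le_mul_of_nonneg_right (hkey k hk1) (ha k hk1)
        linarith
      _ = Real.exp M * ∑ k ∈ Finset.Icc 1 N, a k := by rw [Finset.mul_sum]
      _ ≤ Real.exp M * ∑' n : ℕ, a (n + 1) :=
        mul_le_mul_of_nonneg_left (harange N) hEnn
  have hgnn : ∀ n : ℕ,
      0 ≤ ∏ k ∈ Finset.Icc 1 (n + 1), a k ^ (lam k / Lam (n + 1)) := fun n =>
    Finset.prod_nonneg (fun k hk =>
      Real.rpow_nonneg (ha k (Finset.mem_Icc.mp hk).1) _)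
  exact Real.tsum_le_of_sum_range_le hgnn hbound
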